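/- Let Q be a groupoid on a topological space X, s a local subgroupoid of Q with atlas U_s = {(U_i, H_i)}, and suppose S is any wide subgroupoid of Q with s ≤ loc(S). Then there exists a refinement W of U_s such that glob(W) ≤ S, where glob(W) is the subgroupoid generated by the members of W. -/
import Mathlib


open CategoryTheory

/-- A wide subgroupoid of the full subgroupoid `Q|U` of a groupoid `Q` on `X`. -/
structure WideSub (X : Type*) [Groupoid X] (U : Set X) where
  arrows : ∀ x y : X, Set (x ⟶ y)
  src_mem : ∀ {x y : X} {f : x ⟶ y}, f ∈ arrows x y → x ∈ U
  tgt_mem : ∀ {x y : X} {f : x ⟶ y}, f ∈ arrows x y → y ∈ U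
  id_mem : ∀ x, x ∈ U → 𝟙 x ∈ arrows x x
  inv_mem : ∀ {x y : X} {f : x ⟶ y}, f ∈ arrows x y → Groupoid.inv f ∈ arrows y x
  comp_mem : ∀ {x y z : X} {f : x ⟶ y} {g : y ⟶ z},
    f ∈ arrows x y → g ∈ arrows y z → f ≫ g ∈ arrows x z

/-- Inclusion of wide subgroupoids (on the same object set). -/
def WideSub.le {X : Type*} [Groupoid X] {U : Set X} (H K : WideSub X U) : Prop :=
  ∀ x y : X, H.arrows x y ⊆ K.arrows x y

/-- Equality of germs of wide subgroupoids at `x`. -/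
def germEquiv {X : Type*} [Groupoid X] [TopologicalSpace X] (x : X)
    (p q : Σ U : Set X, WideSub X U) : Prop :=
  ∃ W : Set X, IsOpen W ∧ x ∈ W ∧ W ⊆ p.1 ∩ q.1 ∧
    ∀ (a b : X) (f : a ⟶ b), a ∈ W → b ∈ W →
      (f ∈ p.2.arrows a b ↔ f ∈ q.2.arrows a b)

/-- The order on germs of wide subgroupoids at `x`. -/
def germLE {X : Type*} [Groupoid X] [TopologicalSpace X] (x : X)
    (p q : Σ U : Set X, WideSub X U) : Prop :=
  ∃ W : Set X, IsOpen W ∧ x ∈ W ∧ W ⊆ p.1 ∩ q.1 ∧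
    ∀ (a b : X) (f : a ⟶ b), a ∈ W → b ∈ W →
      f ∈ p.2.arrows a b → f ∈ q.2.arrows a b

/-- A local subgroupoid of the groupoid `Q` on the space `X`: a global section of the
sheaf of germs of wide subgroupoids, given concretely by a choice, for each `x`, of a
representative `(U x, H x)` with `x ∈ U x`, `U x` open, such that nearby germs agree. -/
structure LocalSub (X : Type*) [Groupoid X] [TopologicalSpace X] where
  U : X → Set X
  isOpen : ∀ x, IsOpen (U x)
  mem : ∀ x, x ∈ U x
  H : ∀ x, WideSub X (U x)
  compat : ∀ x y, y ∈ U x → germEquiv y ⟨U x, H x⟩ ⟨U y, H y⟩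

/-- The pointwise germ order on local subgroupoids. -/
def LocalSub.le {X : Type*} [Groupoid X] [TopologicalSpace X]
    (s t : LocalSub X) : Prop :=
  ∀ x : X, germLE x ⟨s.U x, s.H x⟩ ⟨t.U x, t.H x⟩

/-- `loc H`: the local subgroupoid `x ↦ [X, H]_x` of a wide subgroupoid `H` of `Q`. -/
def loc {X : Type*} [Groupoid X] [TopologicalSpace X]
    (H : WideSub X (Set.univ : Set X)) : LocalSub X where
  U _ := Set.univ
  isOpen _ := isOpen_univ
  mem _ := Set.mem_univ _
  H _ := H
  compat _ y _ := ⟨Set.univ, isOpen_univ, Set.mem_univ y,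
    fun z _ => ⟨Set.mem_univ z, Set.mem_univ z⟩, fun _ _ _ _ _ => Iff.rfl⟩

/-- `glob s`: the intersection of all wide subgroupoids `K` of `Q` with `s ≤ loc K`. -/
def globSub {X : Type*} [Groupoid X] [TopologicalSpace X]
    (s : LocalSub X) : WideSub X (Set.univ : Set X) where
  arrows x y := {f | ∀ K : WideSub X (Set.univ : Set X), s.le (loc K) → f ∈ K.arrows x y}
  src_mem _ := Set.mem_univ _
  tgt_mem _ := Set.mem_univ _
  id_mem x _ := fun K _ => K.id_mem x (Set.mem_univ x)
  inv_mem h := fun K hK => K.inv_mem (h K hK)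
  comp_mem hf hg := fun K hK => K.comp_mem (hf K hK) (hg K hK)

/-- An atlas `{(U i, H i) : i ∈ ι}` for a local subgroupoid `s`: an open cover together
with wide subgroupoids `H i` of `Q|U i` representing the germs of `s`. -/
structure Atlas {X : Type*} [Groupoid X] [TopologicalSpace X]
    (s : LocalSub X) (ι : Type*) where
  U : ι → Set X
  isOpen : ∀ i, IsOpen (U i)
  cover : ∀ x : X, ∃ i, x ∈ U i
  H : ∀ i, WideSub X (U i)
  germ : ∀ (i : ι) (x : X), x ∈ U i → germEquiv x ⟨U i, H i⟩ ⟨s.U x, s.H x⟩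

/-- The subgroupoid of `Q` generated by the members of an atlas. -/
def globAtlas {X : Type*} [Groupoid X] [TopologicalSpace X]
    {s : LocalSub X} {ι : Type*} (A : Atlas s ι) : WideSub X (Set.univ : Set X) where
  arrows x y := {f | ∀ K : WideSub X (Set.univ : Set X),
      (∀ (i : ι) (a b : X) (g : a ⟶ b), g ∈ (A.H i).arrows a b → g ∈ K.arrows a b) →
      f ∈ K.arrows x y}
  src_mem _ := Set.mem_univ _
  tgt_mem _ := Set.mem_univ _
  id_mem x _ := fun K hK =>
    Exists.elim (A.cover x) fun i hi => hK i x x (𝟙 x) ((A.H i).id_mem x hi)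
  inv_mem h := fun K hK => K.inv_mem (h K hK)
  comp_mem hf hg := fun K hK => K.comp_mem (hf K hK) (hg K hK)

/-- `B` refines `A`: every chart `(V j, K j)` of `B` is of the form
`(V j, H (i j) | V j)` for some chart of `A` with `V j ⊆ U (i j)`. -/
def Refines {X : Type*} [Groupoid X] [TopologicalSpace X] {s : LocalSub X}
    {ι κ : Type*} (B : Atlas s κ) (A : Atlas s ι) : Prop :=
  ∀ j : κ, ∃ i : ι, B.U j ⊆ A.U i ∧
    ∀ (a b : X) (f : a ⟶ b),
      (f ∈ (B.H j).arrows a b ↔ f ∈ (A.H i).arrows a b ∧ a ∈ B.U j ∧ b ∈ B.U j)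

/-- Restriction of a wide subgroupoid to a smaller object set. -/
def WideSub.restrict {X : Type*} [Groupoid X] {U : Set X} (H : WideSub X U)
    (V : Set X) (hV : V ⊆ U) : WideSub X V where
  arrows a b := {f | f ∈ H.arrows a b ∧ a ∈ V ∧ b ∈ V}
  src_mem h := h.2.1
  tgt_mem h := h.2.2
  id_mem x hx := ⟨H.id_mem x (hV hx), hx, hx⟩
  inv_mem h := ⟨H.inv_mem h.1, h.2.2, h.2.1⟩
  comp_mem hf hg := ⟨H.comp_mem hf.1 hg.1, hf.2.1, hg.2.2⟩

/- STATEMENT 17: If S is a wide subgroupoid of Q with s ≤ loc(S), then some refinement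
B of the atlas A satisfies glob(B) ≤ S. -/
theorem exists_refinement_globAtlas_le {X : Type} [Groupoid X] [TopologicalSpace X]
    (s : LocalSub X) {ι : Type} (A : Atlas s ι)
    (S : WideSub X (Set.univ : Set X)) (hS : s.le (loc S)) :
    ∃ (κ : Type) (B : Atlas s κ), Refines B A ∧ (globAtlas B).le S := by
  classical
  -- choose a chart index for each point
  choose i hi using A.cover
  -- germ equivalence at x between the chart (i x) and s
  have hg : ∀ x, germEquiv x ⟨A.U (i x), A.H (i x)⟩ ⟨s.U x, s.H x⟩ :=
    fun x => A.germ (i x) x (hi x)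
  choose W1 hW1o hW1m hW1sub hW1iff using hg
  -- germ inequality at x between s and S
  choose W2 hW2o hW2m hW2sub hW2le using hS
  set V : X → Set X := fun x => W1 x ∩ W2 x with hV
  have hVo : ∀ x, IsOpen (V x) := fun x => (hW1o x).inter (hW2o x)
  have hVm : ∀ x, x ∈ V x := fun x => ⟨hW1m x, hW2m x⟩
  have hVsub : ∀ x, V x ⊆ A.U (i x) := fun x y hy => (hW1sub x hy.1).1
  refine ⟨X, ⟨V, hVo, fun x => ⟨x, hVm x⟩,
    fun x => (A.H (i x)).restrict (V x) (hVsub x), ?_⟩, ?_, ?_⟩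
  · -- germ condition for the refined atlas
    intro x y hy
    obtain ⟨W', hW'o, hW'm, hW'sub, hW'iff⟩ := A.germ (i x) y (hVsub x hy)
    refine ⟨W' ∩ V x, hW'o.inter (hVo x), ⟨hW'm, hy⟩,
      fun z hz => Set.mem_inter hz.2 (hW'sub hz.1).2, ?_⟩
    intro a b f ha hb
    constructor
    · intro hf
      exact (hW'iff a b f ha.1 hb.1).1 hf.1
    · intro hf
      exact ⟨(hW'iff a b f ha.1 hb.1).2 hf, ha.2, hb.2⟩
  · -- refinement
    intro j
    exact ⟨i j, hVsub j, fun a b f => Iff.rfl⟩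
  · -- glob ≤ S
    intro x y f hf
    refine hf S ?_
    intro j a b g hgj
    obtain ⟨hgH, haV, hbV⟩ := hgj
    have hgs : g ∈ (s.H j).arrows a b :=
      (hW1iff j a b g haV.1 hbV.1).1 hgH
    exact hW2le j a b g haV.2 hbV.2 hgs
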